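/- arXiv:1302.1936 — 2 statements merged into one kernel-verified Lean document; each statement's English description precedes it below -/
import Mathlib

section
/- If (Q,S) and (C,T) are QPs on the same vertex set with (Q,S) reduced and (C,T) trivial, then the Jacobian algebra of the direct sum satisfies 𝒫(Q⊕C, S+T) ≅ 𝒫(Q,S); in particular, a trivial QP (C,T) has Jacobian algebra 𝒫(C,T) ≅ R = ℂ^{Q₀}. -/
open scoped Classical

/-- A quiver on vertex set `V`: a set of arrows with tail (`src`) and head (`tgt`) maps. -/
structure Quiv (V : Type) where
  A : Type
  src : A → V
  tgt : A → V

namespace Quiv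

variable {V : Type} (Q : Quiv V)

/-- `Comp a b` means the arrow `a` can be composed after `b` (t(a) = h(b)). -/
def Comp (a b : Q.A) : Prop := Q.src a = Q.tgt b

/-- Positive-length paths: nonempty lists `[α₁, …, α_ℓ]` of composable arrows
(function-composition order: `t(α_j) = h(α_{j+1})`). -/
abbrev PathsPos := {l : List Q.A // l ≠ [] ∧ l.Chain' Q.Comp}

/-- Paths: either a lazy path `e_i` at a vertex `i`, or a positive-length path. -/
abbrev Pth := V ⊕ Q.PathsPos

namespace Pth

variable {Q}

/-- The length of a path. -/
def length : Q.Pth → ℕ := Sum.elim (fun _ => 0) (fun l => l.1.length)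

/-- The tail `t(p)` (starting vertex) of a path. -/
def src : Q.Pth → V := Sum.elim id (fun l => Q.src (l.1.getLast l.2.1))

/-- The head `h(p)` (ending vertex) of a path. -/
def tgt : Q.Pth → V := Sum.elim id (fun l => Q.tgt (l.1.head l.2.1))

end Pth

/-- The underlying vector space of the complete path algebra ℂ⟨⟨Q⟩⟩: all possibly
infinite ℂ-linear combinations of paths, encoded as coefficient functions. -/
abbrev CPA := Q.Pth → ℂ

/-- The coefficient of a list of arrows, viewed as a path (with `x` as fallback vertex
for the empty list). -/
noncomputable def coefAt (u : Q.CPA) (x : V) (l : List Q.A) : ℂ :=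
  if h : l = [] then u (Sum.inl x)
  else if hc : l.Chain' Q.Comp then u (Sum.inr ⟨l, h, hc⟩) else 0

/-- The multiplication of the (complete) path algebra, induced by concatenation of
paths: the coefficient of a path `p` in `conv u v` is the (finite) sum over all
splittings `p = p₁ p₂` of `u(p₁) * v(p₂)`. -/
noncomputable def conv (u v : Q.CPA) : Q.CPA := fun p =>
  match p with
  | Sum.inl x => u (Sum.inl x) * v (Sum.inl x)
  | Sum.inr l => ∑ n ∈ Finset.range (l.1.length + 1),
      coefAt Q u (Q.tgt (l.1.head l.2.1)) (l.1.take n) *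
      coefAt Q v (Q.src (l.1.getLast l.2.1)) (l.1.drop n)

/-- The identity element `∑ i e_i` of the path algebra. -/
noncomputable def one : Q.CPA := Sum.elim (fun _ => 1) (fun _ => 0)

/-- The idempotent `e_i` (the length-0 path at vertex `i`). -/
noncomputable def idem (i : V) : Q.CPA := fun p => if p = Sum.inl i then 1 else 0

/-- The arrow `a`, viewed as an element of the path algebra. -/
noncomputable def arrowδ (a : Q.A) : Q.CPA := fun p =>
  if p = Sum.inr ⟨[a], List.cons_ne_nil a [], List.isChain_singleton a⟩ then 1 else 0

/-- A path, viewed as an element of the path algebra. -/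
noncomputable def pathδ (p₀ : Q.Pth) : Q.CPA := fun p => if p = p₀ then 1 else 0

/-- Elements of ℂ⟨⟨Q⟩⟩ with coefficients supported in bounded length, i.e. the
elements of the path algebra ℂ⟨Q⟩ = ⊕_{ℓ≥0} A^ℓ. -/
def Bounded (u : Q.CPA) : Prop := ∃ N : ℕ, ∀ p : Q.Pth, N ≤ p.length → u p = 0

/-- A cycle is a positive-length path which starts and ends at the same vertex. -/
def IsCycle (p : Q.Pth) : Prop := 0 < p.length ∧ p.src = p.tgt

/-- A potential: a (possibly infinite) linear combination of cycles, no two of which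
are rotations of each other. -/
def IsPotential (S : Q.CPA) : Prop :=
  (∀ p : Q.Pth, S p ≠ 0 → Q.IsCycle p) ∧
  ∀ l l' : Q.PathsPos, S (Sum.inr l) ≠ 0 → S (Sum.inr l') ≠ 0 → l.1 ~r l'.1 → l = l'

/-- The cyclic derivative with respect to the arrow `a`:
`∂_a(α₁…α_ℓ) = ∑_k δ_{a,α_k} α_{k+1}…α_ℓα₁…α_{k-1}`, extended by linearity and
continuity.  The coefficient of a path `q` in `∂_a S` is the sum of the coefficients
in `S` of all rotations of the cycle `a·q`. -/
noncomputable def cycDer (a : Q.A) (S : Q.CPA) : Q.CPA := fun p =>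
  match p with
  | Sum.inl x =>
      if Q.src a = x ∧ Q.tgt a = x then coefAt Q S x [a] else 0
  | Sum.inr l => ∑ m ∈ Finset.range (l.1.length + 1),
      coefAt Q S (Q.tgt a) ((a :: l.1).rotate m)

/-- The two-sided ideal generated by a subset of ℂ⟨⟨Q⟩⟩. -/
def idealGen (Sg : Set Q.CPA) : Set Q.CPA :=
  {x | ∃ (n : ℕ) (f g s : Fin n → Q.CPA), (∀ k, s k ∈ Sg) ∧
    x = ∑ k, Q.conv (f k) (Q.conv (s k) (g k))}

/-- The closure of a subset of ℂ⟨⟨Q⟩⟩ in the 𝔪-adic topology. -/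
def mAdicCl (T : Set Q.CPA) : Set Q.CPA :=
  {u | ∀ n : ℕ, ∃ v ∈ T, ∀ p : Q.Pth, p.length < n → u p = v p}

/-- The Jacobian ideal `J(S)`: the closure of the two-sided ideal generated by the
cyclic derivatives of `S`. -/
def jacobIdeal (S : Q.CPA) : Set Q.CPA :=
  Q.mAdicCl (Q.idealGen (Set.range fun a => Q.cycDer a S))

/-- The set of differences `c - c'` where `c` is a cycle and `c'` its rotation. -/
def rotDiffs : Set Q.CPA :=
  {x | ∃ l l' : Q.PathsPos, Q.IsCycle (Sum.inr l) ∧ l'.1 = l.1.rotate 1 ∧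
    x = Q.pathδ (Sum.inr l) - Q.pathδ (Sum.inr l')}

/-- Cyclic equivalence: `S - S'` lies in the closure of the span of the
rotation differences of cycles. -/
def CycEquiv (S S' : Q.CPA) : Prop :=
  S - S' ∈ Q.mAdicCl (Submodule.span ℂ Q.rotDiffs : Submodule ℂ Q.CPA)

end Quiv

namespace Quiv

variable {V : Type}

/-- The direct sum `Q ⊕ C` of two quivers on the same vertex set: the arrow set is the
disjoint union of the two arrow sets. -/
def dsum (Q C : Quiv V) : Quiv V where
  A := Q.A ⊕ C.A
  src := Sum.elim Q.src C.src
  tgt := Sum.elim Q.tgt C.tgt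

/-- The inclusion `ℂ⟨⟨Q⟩⟩ → ℂ⟨⟨Q ⊕ C⟩⟩` induced by the inclusion of arrows. -/
noncomputable def inclL (Q C : Quiv V) (u : Q.CPA) : (Q.dsum C).CPA := fun p =>
  match p with
  | Sum.inl x => u (Sum.inl x)
  | Sum.inr l =>
      if h : ∃ l' : Q.PathsPos, l'.1.map Sum.inl = l.1 then u (Sum.inr h.choose) else 0

/-- The inclusion `ℂ⟨⟨C⟩⟩ → ℂ⟨⟨Q ⊕ C⟩⟩` induced by the inclusion of arrows. -/
noncomputable def inclR (Q C : Quiv V) (u : C.CPA) : (Q.dsum C).CPA := fun p =>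
  match p with
  | Sum.inl x => u (Sum.inl x)
  | Sum.inr l =>
      if h : ∃ l' : C.PathsPos, l'.1.map Sum.inr = l.1 then u (Sum.inr h.choose) else 0

/-- A QP is reduced if the degree-2 component of its potential vanishes. -/
def IsReduced (Q : Quiv V) (S : Q.CPA) : Prop :=
  Q.IsPotential S ∧ ∀ p : Q.Pth, S p ≠ 0 → p.length ≠ 2

/-- A QP is trivial if its potential lies in `A²` (a combination of 2-cycles) and the
cyclic derivatives of the potential span `A` (the span of the arrows). -/
def IsTrivial (C : Quiv V) (T : C.CPA) : Prop :=
  C.IsPotential T ∧ (∀ p : C.Pth, T p ≠ 0 → p.length = 2) ∧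
  ∀ u : C.CPA, (∀ p : C.Pth, u p ≠ 0 → p.length = 1) →
    u ∈ Submodule.span ℂ (Set.range fun a => C.cycDer a T)


end Quiv

section Aux
set_option linter.dupNamespace false
namespace Quiv

variable {V : Type} {Q : Quiv V}

lemma coefAt_nil (u : Q.CPA) (x : V) : Q.coefAt u x [] = u (Sum.inl x) := by
  simp [coefAt]

lemma coefAt_pos (u : Q.CPA) (x : V) {l : List Q.A} (h : l ≠ []) (hc : l.Chain' Q.Comp) :
    Q.coefAt u x l = u (Sum.inr ⟨l, h, hc⟩) := by
  simp [coefAt, h, hc]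

lemma coefAt_of_not_chain (u : Q.CPA) (x : V) {l : List Q.A} (h : l ≠ [])
    (hc : ¬ l.Chain' Q.Comp) : Q.coefAt u x l = 0 := by
  simp [coefAt, h, hc]

lemma coefAt_add (u v : Q.CPA) (x : V) (l : List Q.A) :
    Q.coefAt (u + v) x l = Q.coefAt u x l + Q.coefAt v x l := by
  unfold coefAt; split_ifs <;> simp

lemma coefAt_smul (c : ℂ) (u : Q.CPA) (x : V) (l : List Q.A) :
    Q.coefAt (c • u) x l = c * Q.coefAt u x l := by
  unfold coefAt; split_ifs <;> simp

lemma coefAt_zero (x : V) (l : List Q.A) : Q.coefAt (0 : Q.CPA) x l = 0 := by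
  unfold coefAt; split_ifs <;> rfl

/-- The delta function of a list (vertex `x` used when the list is empty). -/
noncomputable def D (Q : Quiv V) (x : V) (l : List Q.A) : Q.CPA := fun p =>
  match p with
  | Sum.inl y => if l = [] ∧ y = x then 1 else 0
  | Sum.inr m => if m.1 = l then 1 else 0

@[simp] lemma D_inl (x y : V) (l : List Q.A) :
    Q.D x l (Sum.inl y) = if l = [] ∧ y = x then 1 else 0 := rfl

@[simp] lemma D_inr (x : V) (l : List Q.A) (m : Q.PathsPos) :
    Q.D x l (Sum.inr m) = if m.1 = l then 1 else 0 := rfl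

lemma pathδ_eq_D (x : V) (m : Q.PathsPos) : Q.pathδ (Sum.inr m) = Q.D x m.1 := by
  funext p
  cases p with
  | inl y => simp [pathδ, m.2.1]
  | inr m' =>
    simp only [pathδ, D_inr, Sum.inr.injEq]
    by_cases h : m' = m
    · simp [h]
    · rw [if_neg h, if_neg (fun hh => h (Subtype.ext hh))]

lemma idem_eq_D (i : V) : Q.idem i = Q.D i [] := by
  funext p
  cases p with
  | inl y => simp [idem, Sum.inl.injEq, eq_comm]
  | inr m => simp [idem, m.2.1]

lemma arrowδ_eq_D (x : V) (a : Q.A) : Q.arrowδ a = Q.D x [a] := by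
  funext p
  cases p with
  | inl y => simp [arrowδ]
  | inr m =>
    simp only [arrowδ, D_inr, Sum.inr.injEq]
    by_cases h : m.1 = [a]
    · rw [if_pos (Subtype.ext h), if_pos h]
    · rw [if_neg (fun hh => h (congrArg Subtype.val hh)), if_neg h]

lemma coefAt_D (x y : V) (l m : List Q.A) (hc : m.Chain' Q.Comp) :
    Q.coefAt (Q.D x l) y m = if m = l ∧ (m = [] → y = x) then 1 else 0 := by
  rcases eq_or_ne m [] with rfl | h
  · rw [coefAt_nil]
    by_cases hl : l = [] <;> by_cases hy : y = x <;> simp [hl, hy, eq_comm]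
  · rw [coefAt_pos _ _ h hc]
    simp [h]

lemma conv_inl (u v : Q.CPA) (x : V) :
    Q.conv u v (Sum.inl x) = u (Sum.inl x) * v (Sum.inl x) := rfl

lemma conv_inr (u v : Q.CPA) (l : Q.PathsPos) :
    Q.conv u v (Sum.inr l) = ∑ n ∈ Finset.range (l.1.length + 1),
      Q.coefAt u (Q.tgt (l.1.head l.2.1)) (l.1.take n) *
      Q.coefAt v (Q.src (l.1.getLast l.2.1)) (l.1.drop n) := rfl

lemma conv_add_left (u v w : Q.CPA) : Q.conv (u + v) w = Q.conv u w + Q.conv v w := by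
  funext p
  cases p with
  | inl x => simp [conv_inl]; ring
  | inr l => simp [conv_inr, coefAt_add, add_mul, Finset.sum_add_distrib]

lemma conv_add_right (u v w : Q.CPA) : Q.conv u (v + w) = Q.conv u v + Q.conv u w := by
  funext p
  cases p with
  | inl x => simp [conv_inl]; ring
  | inr l => simp [conv_inr, coefAt_add, mul_add, Finset.sum_add_distrib]

lemma conv_smul_left (c : ℂ) (u v : Q.CPA) : Q.conv (c • u) v = c • Q.conv u v := by
  funext p
  cases p with
  | inl x => simp [conv_inl]; ring
  | inr l => simp [conv_inr, coefAt_smul, Finset.mul_sum, mul_assoc]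

lemma conv_smul_right (c : ℂ) (u v : Q.CPA) : Q.conv u (c • v) = c • Q.conv u v := by
  funext p
  cases p with
  | inl x => simp [conv_inl]; ring
  | inr l =>
    simp only [conv_inr, coefAt_smul, Pi.smul_apply, smul_eq_mul, Finset.mul_sum]
    apply Finset.sum_congr rfl
    intro n _; ring

lemma conv_zero_left (v : Q.CPA) : Q.conv 0 v = 0 := by
  funext p
  cases p with
  | inl x => simp [conv_inl]
  | inr l => simp [conv_inr, coefAt_zero]

lemma conv_zero_right (v : Q.CPA) : Q.conv v 0 = 0 := by
  funext p
  cases p with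
  | inl x => simp [conv_inl]
  | inr l => simp [conv_inr, coefAt_zero]

lemma conv_sum_left {ι : Type*} (s : Finset ι) (f : ι → Q.CPA) (v : Q.CPA) :
    Q.conv (∑ i ∈ s, f i) v = ∑ i ∈ s, Q.conv (f i) v := by
  induction s using Finset.induction_on with
  | empty => simp [conv_zero_left]
  | insert a s' h ih => simp [Finset.sum_insert h, conv_add_left, ih]

lemma conv_sum_right {ι : Type*} (s : Finset ι) (f : ι → Q.CPA) (v : Q.CPA) :
    Q.conv v (∑ i ∈ s, f i) = ∑ i ∈ s, Q.conv v (f i) := by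
  induction s using Finset.induction_on with
  | empty => simp [conv_zero_right]
  | insert a s' h ih => simp [Finset.sum_insert h, conv_add_right, ih]

lemma conv_D_inr (x y : V) (l₁ l₂ : List Q.A) (m : Q.PathsPos)
    (hx : m.1 = l₁ ++ l₂ → l₁ = [] → Q.tgt (m.1.head m.2.1) = x)
    (hy : m.1 = l₁ ++ l₂ → l₂ = [] → Q.src (m.1.getLast m.2.1) = y) :
    Q.conv (Q.D x l₁) (Q.D y l₂) (Sum.inr m) = if m.1 = l₁ ++ l₂ then 1 else 0 := by
  rw [conv_inr]
  by_cases hlen : l₁.length ≤ m.1.length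
  · rw [Finset.sum_eq_single_of_mem l₁.length (by rw [Finset.mem_range]; omega)]
    · rw [coefAt_D _ _ _ _ (m.2.2.take _), coefAt_D _ _ _ _ (m.2.2.drop _)]
      by_cases h : m.1 = l₁ ++ l₂
      · have ht : m.1.take l₁.length = l₁ := by rw [h]; exact List.take_left
        have hd : m.1.drop l₁.length = l₂ := by rw [h]; exact List.drop_left
        rw [if_pos ⟨ht, fun h0 => hx h (by rwa [ht] at h0)⟩,
          if_pos ⟨hd, fun h0 => hy h (by rwa [hd] at h0)⟩, if_pos h, one_mul]
      · rw [if_neg h]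
        by_cases h1 : m.1.take l₁.length = l₁
        · have h2 : m.1.drop l₁.length ≠ l₂ := fun h2 => h (by
            conv_lhs => rw [← List.take_append_drop l₁.length m.1]
            rw [h1, h2])
          rw [mul_comm, if_neg (fun hh => h2 hh.1), zero_mul]
        · rw [if_neg (fun hh => h1 hh.1), zero_mul]
    · intro n hn hne
      rw [coefAt_D _ _ _ _ (m.2.2.take _)]
      have : m.1.take n ≠ l₁ := by
        intro hh
        have := congrArg List.length hh
        rw [List.length_take] at this
        rw [Finset.mem_range] at hn
        omega
      rw [if_neg (fun hh => this hh.1), zero_mul]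
  · have h : m.1 ≠ l₁ ++ l₂ := by
      intro hh; apply hlen; rw [hh]; simp
    rw [if_neg h]
    apply Finset.sum_eq_zero
    intro n hn
    rw [coefAt_D _ _ _ _ (m.2.2.take _)]
    have : m.1.take n ≠ l₁ := by
      intro hh
      have := congrArg List.length hh
      rw [List.length_take] at this
      omega
    rw [if_neg (fun hh => this hh.1), zero_mul]

lemma conv_D_single (a : Q.A) (x z : V) (l₂ : List Q.A) :
    Q.conv (Q.D x [a]) (Q.D (Q.src a) l₂) = Q.D z (a :: l₂) := by
  funext p
  cases p with
  | inl y => simp [conv_inl]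
  | inr m =>
    rw [conv_D_inr x (Q.src a) [a] l₂ m (fun _ h => absurd h (by simp)) ?hy, D_inr]
    · rfl
    case hy =>
      intro h h2
      subst h2
      obtain ⟨l, hne, hc⟩ := m
      simp only at h
      subst h
      rfl

lemma conv_D_cons (a : Q.A) (z w : V) (l₁ l₂ : List Q.A) :
    Q.conv (Q.D (Q.tgt a) l₁) (Q.D w (a :: l₂)) = Q.D z (l₁ ++ a :: l₂) := by
  funext p
  cases p with
  | inl y => simp [conv_inl]
  | inr m =>
    rw [conv_D_inr (Q.tgt a) w l₁ (a :: l₂) m ?hx (fun _ h => absurd h (by simp)), D_inr]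
    case hx =>
      intro h h2
      subst h2
      obtain ⟨l, hne, hc⟩ := m
      simp only [List.nil_append] at h
      subst h
      rfl

lemma D_decomp (x w : V) (a : Q.A) (l₁ l₂ : List Q.A) :
    Q.D x (l₁ ++ a :: l₂) =
      Q.conv (Q.D (Q.tgt a) l₁) (Q.conv (Q.D w [a]) (Q.D (Q.src a) l₂)) := by
  rw [conv_D_single a w w l₂, conv_D_cons a x w l₁ l₂]

lemma idealGen_zero (Sg : Set Q.CPA) : (0 : Q.CPA) ∈ Q.idealGen Sg :=
  ⟨0, Fin.elim0, Fin.elim0, Fin.elim0, fun k => k.elim0, by simp⟩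

lemma idealGen_triple {Sg : Set Q.CPA} {s₀ : Q.CPA} (hs : s₀ ∈ Sg) (f g : Q.CPA) :
    Q.conv f (Q.conv s₀ g) ∈ Q.idealGen Sg :=
  ⟨1, fun _ => f, fun _ => g, fun _ => s₀, fun _ => hs, by simp⟩

lemma idealGen_add {Sg : Set Q.CPA} {x y : Q.CPA} (hx : x ∈ Q.idealGen Sg)
    (hy : y ∈ Q.idealGen Sg) : x + y ∈ Q.idealGen Sg := by
  obtain ⟨n, f, g, s, hs, rfl⟩ := hx
  obtain ⟨n', f', g', s', hs', rfl⟩ := hy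
  refine ⟨n + n', Fin.append f f', Fin.append g g', Fin.append s s', ?_, ?_⟩
  · intro k
    refine Fin.addCases (fun i => ?_) (fun i => ?_) k
    · rw [Fin.append_left]; exact hs i
    · rw [Fin.append_right]; exact hs' i
  · rw [Fin.sum_univ_add]
    congr 1 <;> apply Finset.sum_congr rfl <;> intro i _
    · rw [Fin.append_left, Fin.append_left, Fin.append_left]
    · rw [Fin.append_right, Fin.append_right, Fin.append_right]

lemma idealGen_smul {Sg : Set Q.CPA} (c : ℂ) {x : Q.CPA} (hx : x ∈ Q.idealGen Sg) :
    c • x ∈ Q.idealGen Sg := by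
  obtain ⟨n, f, g, s, hs, rfl⟩ := hx
  refine ⟨n, fun k => c • f k, g, s, hs, ?_⟩
  rw [Finset.smul_sum]
  apply Finset.sum_congr rfl
  intro i _
  rw [conv_smul_left]

lemma idealGen_sum {Sg : Set Q.CPA} {ι : Type*} (s : Finset ι) (f : ι → Q.CPA)
    (h : ∀ i ∈ s, f i ∈ Q.idealGen Sg) : (∑ i ∈ s, f i) ∈ Q.idealGen Sg := by
  classical
  induction s using Finset.induction_on with
  | empty => simpa using idealGen_zero Sg
  | insert a s' hni ih =>
    rw [Finset.sum_insert hni]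
    exact idealGen_add (h a (by simp)) (ih fun i hi => h i (by simp [hi]))

lemma mem_mAdicCl_self {T : Set Q.CPA} {x : Q.CPA} (h : x ∈ T) : x ∈ Q.mAdicCl T :=
  fun _ => ⟨x, h, fun _ _ => rfl⟩

lemma mAdicCl_add {T : Set Q.CPA} (hT : ∀ a b, a ∈ T → b ∈ T → a + b ∈ T)
    {x y : Q.CPA} (hx : x ∈ Q.mAdicCl T) (hy : y ∈ Q.mAdicCl T) :
    x + y ∈ Q.mAdicCl T := by
  intro n
  obtain ⟨v, hv, hv2⟩ := hx n
  obtain ⟨w, hw, hw2⟩ := hy n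
  exact ⟨v + w, hT _ _ hv hw, fun p hp => by simp [hv2 p hp, hw2 p hp]⟩

lemma jacobIdeal_add {S : Q.CPA} {x y : Q.CPA} (hx : x ∈ Q.jacobIdeal S)
    (hy : y ∈ Q.jacobIdeal S) : x + y ∈ Q.jacobIdeal S :=
  mAdicCl_add (fun _ _ ha hb => idealGen_add ha hb) hx hy

lemma jacobIdeal_zero (S : Q.CPA) : (0 : Q.CPA) ∈ Q.jacobIdeal S :=
  mem_mAdicCl_self (idealGen_zero _)

lemma mem_mAdicCl_idealGen [Finite Q.A] {Sg : Set Q.CPA} (u : Q.CPA)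
    (h0 : ∀ x, u (Sum.inl x) = 0)
    (h1 : ∀ m : Q.PathsPos, u (Sum.inr m) ≠ 0 → Q.pathδ (Sum.inr m) ∈ Q.idealGen Sg) :
    u ∈ Q.mAdicCl (Q.idealGen Sg) := by
  intro n
  have hfin : {m : Q.PathsPos | m.1.length < n}.Finite := by
    have : {m : Q.PathsPos | m.1.length < n} =
        (Subtype.val) ⁻¹' {l : List Q.A | l.length < n} := rfl
    rw [this]
    exact (List.finite_length_lt Q.A n).preimage
      (Set.injOn_of_injective Subtype.val_injective)
  refine ⟨∑ m ∈ hfin.toFinset, u (Sum.inr m) • Q.pathδ (Sum.inr m), ?_, ?_⟩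
  · apply idealGen_sum
    intro m _
    by_cases hu : u (Sum.inr m) = 0
    · rw [hu, zero_smul]; exact idealGen_zero _
    · exact idealGen_smul _ (h1 m hu)
  · intro p hp
    cases p with
    | inl x =>
      rw [h0, Finset.sum_apply]
      symm
      apply Finset.sum_eq_zero
      intro m _
      simp [pathδ]
    | inr m =>
      have hm : m ∈ hfin.toFinset := by
        rw [Set.Finite.mem_toFinset]
        exact hp
      rw [Finset.sum_apply]
      have : ∀ m' ∈ hfin.toFinset,
          (u (Sum.inr m') • Q.pathδ (Sum.inr m')) (Sum.inr m) =
          if m' = m then u (Sum.inr m') else 0 := by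
        intro m' _
        simp only [Pi.smul_apply, pathδ, smul_eq_mul]
        by_cases h : m' = m
        · simp [h]
        · rw [if_neg h, if_neg (fun hh => h (by cases hh; rfl)), mul_zero]
      rw [Finset.sum_congr rfl this, Finset.sum_ite_eq' hfin.toFinset m, if_pos hm]

section Dsum

variable (Q C : Quiv V)

@[simp] lemma dsum_src_inl (a : Q.A) : (Q.dsum C).src (Sum.inl a) = Q.src a := rfl
@[simp] lemma dsum_src_inr (c : C.A) : (Q.dsum C).src (Sum.inr c) = C.src c := rfl
@[simp] lemma dsum_tgt_inl (a : Q.A) : (Q.dsum C).tgt (Sum.inl a) = Q.tgt a := rfl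
@[simp] lemma dsum_tgt_inr (c : C.A) : (Q.dsum C).tgt (Sum.inr c) = C.tgt c := rfl

lemma chain'_map_inl {l : List Q.A} :
    (l.map Sum.inl).Chain' (Q.dsum C).Comp ↔ l.Chain' Q.Comp := by
  exact List.isChain_map _

lemma chain'_map_inr {l : List C.A} :
    (l.map Sum.inr).Chain' (Q.dsum C).Comp ↔ l.Chain' C.Comp := by
  exact List.isChain_map _

/-- The image of a positive path of `Q` in `Q ⊕ C`. -/
def mapL (l : Q.PathsPos) : (Q.dsum C).PathsPos :=
  ⟨l.1.map Sum.inl, by intro h; exact l.2.1 (List.map_eq_nil_iff.mp h), (chain'_map_inl Q C).2 l.2.2⟩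

/-- The image of a positive path of `C` in `Q ⊕ C`. -/
def mapR (l : C.PathsPos) : (Q.dsum C).PathsPos :=
  ⟨l.1.map Sum.inr, by intro h; exact l.2.1 (List.map_eq_nil_iff.mp h), (chain'_map_inr Q C).2 l.2.2⟩

/-- The projection `ℂ⟨⟨Q ⊕ C⟩⟩ → ℂ⟨⟨Q⟩⟩` (restriction of coefficients). -/
noncomputable def phi (u : (Q.dsum C).CPA) : Q.CPA :=
  fun p => u (Sum.elim Sum.inl (fun l => Sum.inr (mapL Q C l)) p)

@[simp] lemma phi_inl (u : (Q.dsum C).CPA) (x : V) :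
    phi Q C u (Sum.inl x) = u (Sum.inl x) := rfl

@[simp] lemma phi_inr (u : (Q.dsum C).CPA) (l : Q.PathsPos) :
    phi Q C u (Sum.inr l) = u (Sum.inr (mapL Q C l)) := rfl

lemma phi_add (u v : (Q.dsum C).CPA) : phi Q C (u + v) = phi Q C u + phi Q C v := rfl

lemma phi_smul (c : ℂ) (u : (Q.dsum C).CPA) : phi Q C (c • u) = c • phi Q C u := rfl

lemma inclL_inl (u : Q.CPA) (x : V) : inclL Q C u (Sum.inl x) = u (Sum.inl x) := rfl

lemma inclR_inl (u : C.CPA) (x : V) : inclR Q C u (Sum.inl x) = u (Sum.inl x) := rfl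

lemma inclL_inr (u : Q.CPA) (m : (Q.dsum C).PathsPos) :
    inclL Q C u (Sum.inr m) =
      if h : ∃ l' : Q.PathsPos, l'.1.map Sum.inl = m.1 then u (Sum.inr h.choose)
      else 0 := rfl

lemma inclR_inr (u : C.CPA) (m : (Q.dsum C).PathsPos) :
    inclR Q C u (Sum.inr m) =
      if h : ∃ l' : C.PathsPos, l'.1.map Sum.inr = m.1 then u (Sum.inr h.choose)
      else 0 := rfl

lemma inclL_mapL (u : Q.CPA) (l : Q.PathsPos) :
    inclL Q C u (Sum.inr (mapL Q C l)) = u (Sum.inr l) := by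
  rw [inclL_inr]
  have h : ∃ l' : Q.PathsPos, l'.1.map Sum.inl = (mapL Q C l).1 := ⟨l, rfl⟩
  rw [dif_pos h]
  congr 1
  have := h.choose_spec
  have h2 : h.choose.1 = l.1 :=
    List.map_injective_iff.mpr Sum.inl_injective this
  exact congrArg Sum.inr (Subtype.ext h2)

lemma inclR_mapR (u : C.CPA) (l : C.PathsPos) :
    inclR Q C u (Sum.inr (mapR Q C l)) = u (Sum.inr l) := by
  rw [inclR_inr]
  have h : ∃ l' : C.PathsPos, l'.1.map Sum.inr = (mapR Q C l).1 := ⟨l, rfl⟩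
  rw [dif_pos h]
  congr 1
  have := h.choose_spec
  have h2 : h.choose.1 = l.1 :=
    List.map_injective_iff.mpr Sum.inr_injective this
  exact congrArg Sum.inr (Subtype.ext h2)

lemma inclL_not (u : Q.CPA) (m : (Q.dsum C).PathsPos)
    (h : ¬ ∃ l' : Q.PathsPos, l'.1.map Sum.inl = m.1) :
    inclL Q C u (Sum.inr m) = 0 := by
  rw [inclL_inr, dif_neg h]

lemma inclR_not (u : C.CPA) (m : (Q.dsum C).PathsPos)
    (h : ¬ ∃ l' : C.PathsPos, l'.1.map Sum.inr = m.1) :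
    inclR Q C u (Sum.inr m) = 0 := by
  rw [inclR_inr, dif_neg h]

lemma not_pure_of_inr {m : (Q.dsum C).PathsPos} {c : C.A} (hc : Sum.inr c ∈ m.1) :
    ¬ ∃ l' : Q.PathsPos, l'.1.map Sum.inl = m.1 := by
  rintro ⟨l', hl'⟩
  rw [← hl'] at hc
  obtain ⟨a, _, ha⟩ := List.mem_map.mp hc
  exact Sum.inl_ne_inr ha

lemma not_pure_of_inl {m : (Q.dsum C).PathsPos} {a : Q.A} (ha : Sum.inl a ∈ m.1) :
    ¬ ∃ l' : C.PathsPos, l'.1.map Sum.inr = m.1 := by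
  rintro ⟨l', hl'⟩
  rw [← hl'] at ha
  obtain ⟨b, _, hb⟩ := List.mem_map.mp ha
  exact Sum.inr_ne_inl hb

lemma exists_map_of_forall_inl {α β : Type*} :
    ∀ (l : List (α ⊕ β)), (∀ x ∈ l, ∃ b, x = Sum.inl b) →
      ∃ l₀ : List α, l₀.map Sum.inl = l := by
  intro l
  induction l with
  | nil => exact fun _ => ⟨[], rfl⟩
  | cons x t ih =>
    intro h
    obtain ⟨b, hb⟩ := h x (by simp)
    obtain ⟨t₀, ht₀⟩ := ih (fun y hy => h y (by simp [hy]))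
    exact ⟨b :: t₀, by simp [← hb, ht₀]⟩

lemma pure_or_mixed (m : (Q.dsum C).PathsPos) :
    (∃ l : Q.PathsPos, mapL Q C l = m) ∨ ∃ c : C.A, Sum.inr c ∈ m.1 := by
  by_cases h0 : ∃ c : C.A, Sum.inr c ∈ m.1
  · right; exact h0
  · left
    have h : ∀ x ∈ m.1, ∃ b : Q.A, x = Sum.inl b := by
      intro x hx
      obtain b | c := x
      · exact ⟨b, rfl⟩
      · exact absurd ⟨c, hx⟩ h0
    obtain ⟨l₀, hl₀⟩ := exists_map_of_forall_inl m.1 h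
    have hne : l₀ ≠ [] := by
      intro hh; rw [hh] at hl₀; exact m.2.1 hl₀.symm
    have hc : l₀.Chain' Q.Comp := by
      rw [← chain'_map_inl Q C, hl₀]; exact m.2.2
    exact ⟨⟨l₀, hne, hc⟩, Subtype.ext hl₀⟩

lemma pure_or_mixed' (m : (Q.dsum C).PathsPos) :
    (∃ l : C.PathsPos, mapR Q C l = m) ∨ ∃ a : Q.A, Sum.inl a ∈ m.1 := by
  by_cases h0 : ∃ a : Q.A, Sum.inl a ∈ m.1
  · right; exact h0
  · left
    have h : ∀ x ∈ m.1, ∃ b : C.A, x = Sum.inr b := by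
      intro x hx
      obtain a | c := x
      · exact absurd ⟨a, hx⟩ h0
      · exact ⟨c, rfl⟩
    have h' : ∀ x ∈ m.1.map (Sum.swap), ∃ b, x = Sum.inl b := by
      intro x hx
      obtain ⟨y, hy, hxy⟩ := List.mem_map.mp hx
      obtain ⟨b, hb⟩ := h y hy
      exact ⟨b, by rw [← hxy, hb]; rfl⟩
    obtain ⟨l₀, hl₀⟩ := exists_map_of_forall_inl _ h'
    have hl : l₀.map Sum.inr = m.1 := by
      have := congrArg (List.map (Sum.swap)) hl₀
      erw [List.map_map, List.map_map] at this
      erw [Sum.swap_swap_eq, List.map_id] at this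
      exact this
    have hne : l₀ ≠ [] := by
      intro hh; rw [hh] at hl; exact m.2.1 hl.symm
    have hc : l₀.Chain' C.Comp := by
      rw [← chain'_map_inr Q C, hl]; exact m.2.2
    exact ⟨⟨l₀, hne, hc⟩, Subtype.ext hl⟩

lemma coefAt_inclL (u : Q.CPA) (x : V) (l : List Q.A) :
    (Q.dsum C).coefAt (inclL Q C u) x (l.map Sum.inl) = Q.coefAt u x l := by
  rcases eq_or_ne l [] with rfl | h
  · erw [List.map_nil, coefAt_nil]
  · have hm : l.map (Sum.inl : Q.A → (Q.dsum C).A) ≠ [] := by simp [h]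
    by_cases hc : l.Chain' Q.Comp
    · erw [coefAt_pos _ _ hm ((chain'_map_inl Q C).2 hc), coefAt_pos _ _ h hc]
      exact inclL_mapL Q C u ⟨l, h, hc⟩
    · erw [coefAt_of_not_chain _ _ hm (fun hh => hc ((chain'_map_inl Q C).1 hh)),
        coefAt_of_not_chain _ _ h hc]

lemma coefAt_inclR (u : C.CPA) (x : V) (l : List C.A) :
    (Q.dsum C).coefAt (inclR Q C u) x (l.map Sum.inr) = C.coefAt u x l := by
  rcases eq_or_ne l [] with rfl | h
  · erw [List.map_nil, coefAt_nil]
  · have hm : l.map (Sum.inr : C.A → (Q.dsum C).A) ≠ [] := by simp [h]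
    by_cases hc : l.Chain' C.Comp
    · erw [coefAt_pos _ _ hm ((chain'_map_inr Q C).2 hc), coefAt_pos _ _ h hc]
      exact inclR_mapR Q C u ⟨l, h, hc⟩
    · erw [coefAt_of_not_chain _ _ hm (fun hh => hc ((chain'_map_inr Q C).1 hh)),
        coefAt_of_not_chain _ _ h hc]

lemma coefAt_inclL_mixed (u : Q.CPA) (x : V) {l : List (Q.dsum C).A} {c : C.A}
    (hc : Sum.inr c ∈ l) : (Q.dsum C).coefAt (inclL Q C u) x l = 0 := by
  have h : l ≠ [] := List.ne_nil_of_mem hc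
  by_cases hch : l.Chain' (Q.dsum C).Comp
  · rw [coefAt_pos _ _ h hch]
    exact inclL_not Q C u _ (not_pure_of_inr Q C hc)
  · exact coefAt_of_not_chain _ _ h hch

lemma coefAt_inclR_mixed (u : C.CPA) (x : V) {l : List (Q.dsum C).A} {a : Q.A}
    (ha : Sum.inl a ∈ l) : (Q.dsum C).coefAt (inclR Q C u) x l = 0 := by
  have h : l ≠ [] := List.ne_nil_of_mem ha
  by_cases hch : l.Chain' (Q.dsum C).Comp
  · rw [coefAt_pos _ _ h hch]
    exact inclR_not Q C u _ (not_pure_of_inl Q C ha)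
  · exact coefAt_of_not_chain _ _ h hch

lemma coefAt_inclR_mapinl (u : C.CPA) (x : V) {l : List Q.A} (h : l ≠ []) :
    (Q.dsum C).coefAt (inclR Q C u) x (l.map (Sum.inl : Q.A → (Q.dsum C).A)) = 0 := by
  apply coefAt_inclR_mixed Q C u x (a := l.head h)
  exact List.mem_map_of_mem (f := Sum.inl) (List.head_mem h)

lemma coefAt_inclL_mapinr (u : Q.CPA) (x : V) {l : List C.A} (h : l ≠ []) :
    (Q.dsum C).coefAt (inclL Q C u) x (l.map (Sum.inr : C.A → (Q.dsum C).A)) = 0 := by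
  apply coefAt_inclL_mixed Q C u x (c := l.head h)
  exact List.mem_map_of_mem (f := Sum.inr) (List.head_mem h)

lemma coefAt_phi (u : (Q.dsum C).CPA) (x : V) (l : List Q.A) :
    Q.coefAt (phi Q C u) x l = (Q.dsum C).coefAt u x (l.map Sum.inl) := by
  rcases eq_or_ne l [] with rfl | h
  · erw [List.map_nil, coefAt_nil]
  · have hm : l.map (Sum.inl : Q.A → (Q.dsum C).A) ≠ [] := by simp [h]
    by_cases hc : l.Chain' Q.Comp
    · erw [coefAt_pos _ _ h hc, coefAt_pos _ _ hm ((chain'_map_inl Q C).2 hc)]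
      rfl
    · erw [coefAt_of_not_chain _ _ h hc,
        coefAt_of_not_chain _ _ hm (fun hh => hc ((chain'_map_inl Q C).1 hh))]

lemma mapL_length (l : Q.PathsPos) : (mapL Q C l).1.length = l.1.length := by
  exact List.length_map _

lemma mapR_length (l : C.PathsPos) : (mapR Q C l).1.length = l.1.length := by
  exact List.length_map _

lemma tgt_head_mapL (l : Q.PathsPos) :
    (Q.dsum C).tgt ((mapL Q C l).1.head (mapL Q C l).2.1) = Q.tgt (l.1.head l.2.1) := by
  obtain ⟨l, hne, hc⟩ := l
  cases l with
  | nil => exact absurd rfl hne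
  | cons a t => rfl

lemma src_getLast_mapL (l : Q.PathsPos) :
    (Q.dsum C).src ((mapL Q C l).1.getLast (mapL Q C l).2.1) =
      Q.src (l.1.getLast l.2.1) := by
  have : (mapL Q C l).1.getLast (mapL Q C l).2.1 = Sum.inl (l.1.getLast l.2.1) :=
    List.getLast_map _
  rw [this, dsum_src_inl]

lemma tgt_head_mapR (l : C.PathsPos) :
    (Q.dsum C).tgt ((mapR Q C l).1.head (mapR Q C l).2.1) = C.tgt (l.1.head l.2.1) := by
  obtain ⟨l, hne, hc⟩ := l
  cases l with
  | nil => exact absurd rfl hne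
  | cons a t => rfl

lemma src_getLast_mapR (l : C.PathsPos) :
    (Q.dsum C).src ((mapR Q C l).1.getLast (mapR Q C l).2.1) =
      C.src (l.1.getLast l.2.1) := by
  have : (mapR Q C l).1.getLast (mapR Q C l).2.1 = Sum.inr (l.1.getLast l.2.1) :=
    List.getLast_map _
  rw [this, dsum_src_inr]

@[simp] lemma mapL_coe (l : Q.PathsPos) : (mapL Q C l).1 = l.1.map Sum.inl := rfl
@[simp] lemma mapR_coe (l : C.PathsPos) : (mapR Q C l).1 = l.1.map Sum.inr := rfl

lemma phi_one : phi Q C ((Q.dsum C).one) = Q.one := by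
  funext p
  cases p <;> rfl

lemma phi_conv (u v : (Q.dsum C).CPA) :
    phi Q C ((Q.dsum C).conv u v) = Q.conv (phi Q C u) (phi Q C v) := by
  funext p
  cases p with
  | inl x => rfl
  | inr l =>
    rw [phi_inr, conv_inr, conv_inr]
    simp only [mapL_coe, List.length_map]
    erw [List.length_map]
    apply Finset.sum_congr rfl
    intro n _
    erw [coefAt_phi, coefAt_phi, List.map_take, List.map_drop, List.head_map,
      List.getLast_map, dsum_tgt_inl, dsum_src_inl]
    rfl

lemma phi_inclL (u : Q.CPA) : phi Q C (inclL Q C u) = u := by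
  funext p
  cases p with
  | inl x => rfl
  | inr l => rw [phi_inr, inclL_mapL]

lemma inclL_add (u v : Q.CPA) : inclL Q C (u + v) = inclL Q C u + inclL Q C v := by
  funext p
  cases p with
  | inl x => rfl
  | inr m =>
    simp only [inclL_inr, Pi.add_apply]
    split <;> simp

lemma inclR_add (u v : C.CPA) : inclR Q C (u + v) = inclR Q C u + inclR Q C v := by
  funext p
  cases p with
  | inl x => rfl
  | inr m =>
    simp only [inclR_inr, Pi.add_apply]
    split <;> simp

lemma inclR_smul (c : ℂ) (u : C.CPA) : inclR Q C (c • u) = c • inclR Q C u := by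
  funext p
  cases p with
  | inl x => rfl
  | inr m =>
    simp only [inclR_inr, Pi.smul_apply, smul_eq_mul]
    split <;> simp

lemma inclR_sum {ι : Type*} (s : Finset ι) (f : ι → C.CPA) :
    inclR Q C (∑ i ∈ s, f i) = ∑ i ∈ s, inclR Q C (f i) := by
  classical
  induction s using Finset.induction_on with
  | empty =>
    funext p
    cases p with
    | inl x => rfl
    | inr m =>
      simp only [Finset.sum_empty, inclR_inr]
      split <;> rfl
  | insert a s' hni ih =>
    rw [Finset.sum_insert hni, Finset.sum_insert hni, inclR_add, ih]

lemma inclL_conv (u v : Q.CPA) :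
    inclL Q C (Q.conv u v) = (Q.dsum C).conv (inclL Q C u) (inclL Q C v) := by
  funext p
  cases p with
  | inl x => rfl
  | inr m =>
    rcases pure_or_mixed Q C m with ⟨l, rfl⟩ | ⟨c, hc⟩
    · rw [inclL_mapL, conv_inr, conv_inr]
      simp only [mapL_coe, List.length_map]
      erw [List.length_map]
      apply Finset.sum_congr rfl
      intro n _
      erw [← List.map_take, ← List.map_drop, coefAt_inclL, coefAt_inclL, List.head_map,
        List.getLast_map, dsum_tgt_inl, dsum_src_inl]
    · rw [inclL_not Q C _ _ (not_pure_of_inr Q C hc), conv_inr]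
      symm
      apply Finset.sum_eq_zero
      intro n _
      rcases List.mem_append.mp
        (by rw [List.take_append_drop]; exact hc :
          Sum.inr c ∈ m.1.take n ++ m.1.drop n) with h | h
      · rw [coefAt_inclL_mixed Q C _ _ h, zero_mul]
      · rw [coefAt_inclL_mixed Q C _ _ h, mul_zero]

lemma rotate_cons_ne_nil {α : Type*} (a : α) (t : List α) (k : ℕ) :
    (a :: t).rotate k ≠ [] := by
  intro h
  have := congrArg List.length h
  simp [List.length_rotate] at this

lemma inclR_D (x : V) (l : List C.A) :
    inclR Q C (C.D x l) = (Q.dsum C).D x (l.map Sum.inr) := by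
  funext p
  cases p with
  | inl y =>
    show (if l = [] ∧ y = x then (1 : ℂ) else 0) = _
    rw [D_inl]
    exact if_congr (and_congr_left' List.map_eq_nil_iff.symm) rfl rfl
  | inr m =>
    rw [D_inr]
    by_cases h : ∃ l' : C.PathsPos, l'.1.map Sum.inr = m.1
    · rw [inclR_inr, dif_pos h, D_inr]
      have hs := h.choose_spec
      by_cases he : h.choose.1 = l
      · rw [if_pos he, if_pos (by rw [← hs, he]; rfl)]
      · rw [if_neg he, if_neg (fun hm => he
          (List.map_injective_iff.mpr Sum.inr_injective (by rw [hs, hm]; rfl)))]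
    · rw [inclR_not Q C _ _ h, if_neg]
      intro hm
      rcases eq_or_ne l [] with rfl | hne
      · exact m.2.1 hm
      · exact h ⟨⟨l, hne, (chain'_map_inr Q C).1 (hm ▸ m.2.2)⟩, hm.symm⟩

variable {Q} in
lemma cycDer_at_inl (S : Q.CPA) (a : Q.A) (x : V) :
    Q.cycDer a S (Sum.inl x) =
      if Q.src a = x ∧ Q.tgt a = x then Q.coefAt S x [a] else 0 := rfl

variable {Q} in
lemma cycDer_at_inr (S : Q.CPA) (a : Q.A) (l : Q.PathsPos) :
    Q.cycDer a S (Sum.inr l) = ∑ m ∈ Finset.range (l.1.length + 1),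
      Q.coefAt S (Q.tgt a) ((a :: l.1).rotate m) := rfl

lemma cycDer_dsum_inl (S : Q.CPA) (T : C.CPA) (a : Q.A) :
    (Q.dsum C).cycDer (Sum.inl a) (inclL Q C S + inclR Q C T) =
      inclL Q C (Q.cycDer a S) := by
  funext p
  cases p with
  | inl x =>
    erw [cycDer_at_inl, inclL_inl, cycDer_at_inl]
    simp only [dsum_src_inl, dsum_tgt_inl]
    by_cases h : Q.src a = x ∧ Q.tgt a = x
    · erw [if_pos h, if_pos h, coefAt_add,
        coefAt_inclR_mixed Q C T x (a := a) (List.mem_singleton.mpr rfl), add_zero,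
        show [Sum.inl a] = [a].map (Sum.inl : Q.A → (Q.dsum C).A) from rfl, coefAt_inclL]
    · erw [if_neg h, if_neg h]
  | inr m =>
    rcases pure_or_mixed Q C m with ⟨l, rfl⟩ | ⟨c, hc⟩
    · erw [inclL_mapL, cycDer_at_inr, cycDer_at_inr]
      simp only [mapL_coe, List.length_map, dsum_tgt_inl]
      erw [List.length_map]
      apply Finset.sum_congr rfl
      intro k _
      erw [← List.map_cons, ← List.map_rotate, coefAt_add, coefAt_inclL,
        coefAt_inclR_mapinl Q C T _ (rotate_cons_ne_nil a l.1 k), add_zero]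
    · erw [inclL_not Q C _ _ (not_pure_of_inr Q C hc), cycDer_at_inr]
      apply Finset.sum_eq_zero
      intro k _
      have h1 : Sum.inr c ∈ (Sum.inl a :: m.1).rotate k :=
        List.mem_rotate.mpr (List.mem_cons_of_mem _ hc)
      erw [coefAt_add, coefAt_inclL_mixed Q C _ _ h1,
        coefAt_inclR_mixed Q C _ _ (List.mem_rotate.mpr List.mem_cons_self),
        add_zero]

lemma cycDer_dsum_inr (S : Q.CPA) (T : C.CPA) (c : C.A) :
    (Q.dsum C).cycDer (Sum.inr c) (inclL Q C S + inclR Q C T) =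
      inclR Q C (C.cycDer c T) := by
  funext p
  cases p with
  | inl x =>
    erw [cycDer_at_inl, inclR_inl, cycDer_at_inl]
    simp only [dsum_src_inr, dsum_tgt_inr]
    by_cases h : C.src c = x ∧ C.tgt c = x
    · erw [if_pos h, if_pos h, coefAt_add,
        coefAt_inclL_mixed Q C S x (c := c) (List.mem_singleton.mpr rfl), zero_add,
        show [Sum.inr c] = [c].map (Sum.inr : C.A → (Q.dsum C).A) from rfl, coefAt_inclR]
    · erw [if_neg h, if_neg h]
  | inr m =>
    rcases pure_or_mixed' Q C m with ⟨l, rfl⟩ | ⟨a, ha⟩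
    · erw [inclR_mapR, cycDer_at_inr, cycDer_at_inr]
      simp only [mapR_coe, List.length_map, dsum_tgt_inr]
      erw [List.length_map]
      apply Finset.sum_congr rfl
      intro k _
      erw [← List.map_cons, ← List.map_rotate, coefAt_add, coefAt_inclR,
        coefAt_inclL_mapinr Q C S _ (rotate_cons_ne_nil c l.1 k), zero_add]
    · erw [inclR_not Q C _ _ (not_pure_of_inl Q C ha), cycDer_at_inr]
      apply Finset.sum_eq_zero
      intro k _
      have h1 : Sum.inl a ∈ (Sum.inr c :: m.1).rotate k :=
        List.mem_rotate.mpr (List.mem_cons_of_mem _ ha)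
      erw [coefAt_add, coefAt_inclR_mixed Q C _ _ h1,
        coefAt_inclL_mixed Q C _ _ (List.mem_rotate.mpr List.mem_cons_self),
        zero_add]

lemma inclL_smul (c : ℂ) (u : Q.CPA) : inclL Q C (c • u) = c • inclL Q C u := by
  funext p
  cases p with
  | inl x => rfl
  | inr m =>
    simp only [inclL_inr, Pi.smul_apply, smul_eq_mul]
    split <;> simp

lemma inclL_sum {ι : Type*} (s : Finset ι) (f : ι → Q.CPA) :
    inclL Q C (∑ i ∈ s, f i) = ∑ i ∈ s, inclL Q C (f i) := by
  classical
  induction s using Finset.induction_on with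
  | empty =>
    funext p
    cases p with
    | inl x => rfl
    | inr m =>
      simp only [Finset.sum_empty, inclL_inr]
      split <;> rfl
  | insert a s' hni ih =>
    rw [Finset.sum_insert hni, Finset.sum_insert hni, inclL_add, ih]

lemma phi_sum {ι : Type*} (s : Finset ι) (f : ι → (Q.dsum C).CPA) :
    phi Q C (∑ i ∈ s, f i) = ∑ i ∈ s, phi Q C (f i) := by
  funext p
  rw [Finset.sum_apply]
  cases p with
  | inl x => rw [phi_inl, Finset.sum_apply]; rfl
  | inr l => rw [phi_inr, Finset.sum_apply]; rfl

end Dsum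

lemma arrowδ_support (a : Q.A) : ∀ p : Q.Pth, Q.arrowδ a p ≠ 0 → p.length = 1 := by
  intro p hp
  cases p with
  | inl x => simp [arrowδ] at hp
  | inr m =>
    rw [arrowδ_eq_D (Q.src a) a, D_inr] at hp
    by_cases h : m.1 = [a]
    · show m.1.length = 1
      rw [h]; rfl
    · rw [if_neg h] at hp
      exact absurd rfl hp

lemma cycDer_inl_eq_zero {T : Q.CPA} (hT2 : ∀ p : Q.Pth, T p ≠ 0 → p.length = 2)
    (a : Q.A) (x : V) : Q.cycDer a T (Sum.inl x) = 0 := by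
  rw [cycDer_at_inl]
  have : Q.coefAt T x [a] = 0 := by
    rw [coefAt_pos _ _ (List.cons_ne_nil a []) (List.isChain_singleton a)]
    by_contra h
    have := hT2 _ h
    simp [Pth.length] at this
  rw [this, ite_self]

lemma idealGen_inl_eq_zero {T : Q.CPA}
    (h0 : ∀ (b : Q.A) (x : V), Q.cycDer b T (Sum.inl x) = 0)
    {v : Q.CPA} (hv : v ∈ Q.idealGen (Set.range fun b => Q.cycDer b T)) (x : V) :
    v (Sum.inl x) = 0 := by
  obtain ⟨n, f, g, s, hs, rfl⟩ := hv
  rw [Finset.sum_apply]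
  apply Finset.sum_eq_zero
  intro k _
  obtain ⟨b, hb⟩ := hs k
  rw [conv_inl, conv_inl, ← hb]
  simp [h0]

lemma pathδ_mem_of_arrow {Sg : Set Q.CPA} (m : Q.PathsPos) {l₁ l₂ : List Q.A} {a : Q.A}
    (hsplit : m.1 = l₁ ++ a :: l₂) {ι : Type} [Fintype ι] (t : ι → ℂ) (s : ι → Q.CPA)
    (hs : ∀ i, s i ∈ Sg) (hD : Q.D (Q.src a) [a] = ∑ i, t i • s i) :
    Q.pathδ (Sum.inr m) ∈ Q.idealGen Sg := by
  have key : Q.pathδ (Sum.inr m) = ∑ i : ι, t i •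
      Q.conv (Q.D (Q.tgt a) l₁) (Q.conv (s i) (Q.D (Q.src a) l₂)) := by
    rw [pathδ_eq_D (Q.tgt a) m, hsplit, D_decomp (Q.tgt a) (Q.src a) a l₁ l₂, hD,
      conv_sum_left, conv_sum_right]
    apply Finset.sum_congr rfl
    intro i _
    rw [conv_smul_left, conv_smul_right]
  rw [key]
  apply idealGen_sum
  intro i _
  exact idealGen_smul _ (idealGen_triple (hs i) _ _)

lemma pathδ_mixed_mem {C : Quiv V} [Fintype C.A] (S : Q.CPA) (T : C.CPA)
    (hspan : ∀ u : C.CPA, (∀ p : C.Pth, u p ≠ 0 → p.length = 1) →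
      u ∈ Submodule.span ℂ (Set.range fun a => C.cycDer a T))
    (m : (Q.dsum C).PathsPos) (c : C.A) (hc : Sum.inr c ∈ m.1) :
    (Q.dsum C).pathδ (Sum.inr m) ∈ (Q.dsum C).idealGen
      (Set.range fun b => (Q.dsum C).cycDer b (inclL Q C S + inclR Q C T)) := by
  obtain ⟨l₁, l₂, hsplit⟩ := List.append_of_mem hc
  obtain ⟨t, ht⟩ := (Submodule.mem_span_range_iff_exists_fun ℂ).mp
    (hspan (C.arrowδ c) (arrowδ_support c))
  refine pathδ_mem_of_arrow m hsplit t
    (fun i => (Q.dsum C).cycDer (Sum.inr i) (inclL Q C S + inclR Q C T))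
    (fun i => ⟨Sum.inr i, rfl⟩) ?_
  have h1 : inclR Q C (C.arrowδ c) =
      (Q.dsum C).D ((Q.dsum C).src (Sum.inr c)) [Sum.inr c] := by
    rw [arrowδ_eq_D ((Q.dsum C).src (Sum.inr c)) c, inclR_D]
    rfl
  rw [← h1, ← ht, inclR_sum]
  apply Finset.sum_congr rfl
  intro i _
  simp only [inclR_smul, cycDer_dsum_inr]

lemma phi_inclR_cycDer {C : Quiv V} {T : C.CPA}
    (hT2 : ∀ p : C.Pth, T p ≠ 0 → p.length = 2) (c : C.A) :
    phi Q C (inclR Q C (C.cycDer c T)) = 0 := by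
  funext p
  cases p with
  | inl x =>
    rw [phi_inl, inclR_inl, cycDer_inl_eq_zero hT2]
    rfl
  | inr l =>
    rw [phi_inr]
    apply inclR_not
    rintro ⟨l', hl'⟩
    obtain ⟨b, tb, hb⟩ := List.exists_cons_of_ne_nil l.2.1
    obtain ⟨b', tb', hb'⟩ := List.exists_cons_of_ne_nil l'.2.1
    rw [mapL_coe, hb, hb'] at hl'
    simp at hl'

lemma inclL_jacob {C : Quiv V} (S : Q.CPA) (T : C.CPA) {v : Q.CPA}
    (hv : v ∈ Q.jacobIdeal S) :
    inclL Q C v ∈ (Q.dsum C).jacobIdeal (inclL Q C S + inclR Q C T) := by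
  intro n
  obtain ⟨w, hw, hagree⟩ := hv n
  refine ⟨inclL Q C w, ?_, ?_⟩
  · obtain ⟨k, f, g, s, hs, rfl⟩ := hw
    refine ⟨k, fun j => inclL Q C (f j), fun j => inclL Q C (g j),
      fun j => inclL Q C (s j), ?_, ?_⟩
    · intro j
      obtain ⟨b, hb⟩ := hs j
      refine ⟨Sum.inl b, ?_⟩
      show (Q.dsum C).cycDer (Sum.inl b) _ = inclL Q C (s j)
      rw [← hb, cycDer_dsum_inl]
    · rw [inclL_sum]
      apply Finset.sum_congr rfl
      intro j _
      rw [inclL_conv, inclL_conv]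
  · intro p hp
    cases p with
    | inl x =>
      rw [inclL_inl, inclL_inl]
      exact hagree (Sum.inl x) hp
    | inr m =>
      rcases pure_or_mixed Q C m with ⟨l, rfl⟩ | ⟨c, hc⟩
      · rw [inclL_mapL, inclL_mapL]
        apply hagree (Sum.inr l)
        exact lt_of_eq_of_lt (mapL_length Q C l).symm hp
      · rw [inclL_not Q C _ _ (not_pure_of_inr Q C hc),
          inclL_not Q C _ _ (not_pure_of_inr Q C hc)]

end Quiv
end Aux


open Quiv in
/-- If `(Q,S)` is a reduced QP and `(C,T)` a trivial QP on the same vertex set, then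
the Jacobian algebra of the direct sum satisfies `𝒫(Q⊕C, S+T) ≅ 𝒫(Q,S)` (an
isomorphism of quotient algebras); in particular the Jacobian algebra of a trivial QP
is `𝒫(C,T) ≅ R = ℂ^{Q₀}`. -/
theorem stmt10 (V : Type) [Fintype V] [DecidableEq V] (Q C : Quiv V)
    [Fintype Q.A] [Fintype C.A]
    (S : Q.CPA) (T : C.CPA) (hred : Q.IsReduced S) (htriv : C.IsTrivial T) :
    (∃ φ : (Q.dsum C).CPA → Q.CPA,
      (∀ u v, φ (u + v) = φ u + φ v) ∧
      (∀ (c : ℂ) u, φ (c • u) = c • φ u) ∧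
      (∀ u v, φ ((Q.dsum C).conv u v) - Q.conv (φ u) (φ v) ∈ Q.jacobIdeal S) ∧
      (φ ((Q.dsum C).one) - Q.one ∈ Q.jacobIdeal S) ∧
      Function.Surjective φ ∧
      (∀ u, φ u ∈ Q.jacobIdeal S ↔
        u ∈ (Q.dsum C).jacobIdeal (inclL Q C S + inclR Q C T))) ∧
    (∃ ψ : C.CPA → (V → ℂ),
      (∀ u v, ψ (u + v) = ψ u + ψ v) ∧
      (∀ (c : ℂ) u, ψ (c • u) = c • ψ u) ∧
      (∀ u v, ψ (C.conv u v) = ψ u * ψ v) ∧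
      ψ C.one = 1 ∧
      (∀ i : V, ψ (C.idem i) = Pi.single i 1) ∧
      Function.Surjective ψ ∧
      ∀ u, ψ u = 0 ↔ u ∈ C.jacobIdeal T) := by
  obtain ⟨hpotT, hT2, hspan⟩ := htriv
  haveI : Finite (Q.dsum C).A := inferInstanceAs (Finite (Q.A ⊕ C.A))
  constructor
  · refine ⟨phi Q C, phi_add Q C, phi_smul Q C, ?_, ?_, ?_, ?_⟩
    · intro u v
      rw [phi_conv, sub_self]
      exact jacobIdeal_zero S
    · rw [phi_one, sub_self]
      exact jacobIdeal_zero S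
    · intro v
      exact ⟨inclL Q C v, phi_inclL Q C v⟩
    · intro u
      constructor
      · intro hu
        have hsplit : u = inclL Q C (phi Q C u) + (u - inclL Q C (phi Q C u)) := by abel
        rw [hsplit]
        apply jacobIdeal_add
        · exact inclL_jacob S T hu
        · apply mem_mAdicCl_idealGen
          · intro x
            show u (Sum.inl x) - inclL Q C (phi Q C u) (Sum.inl x) = 0
            rw [inclL_inl, phi_inl, sub_self]
          · intro m hm
            have hmix : ∃ c : C.A, Sum.inr c ∈ m.1 := by
              rcases pure_or_mixed Q C m with ⟨l, rfl⟩ | h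
              · exfalso
                apply hm
                show u (Sum.inr (mapL Q C l)) - inclL Q C (phi Q C u) (Sum.inr (mapL Q C l)) = 0
                rw [inclL_mapL, phi_inr, sub_self]
              · exact h
            obtain ⟨c, hc⟩ := hmix
            exact pathδ_mixed_mem S T hspan m c hc
      · intro hu n
        obtain ⟨v, hv, hagree⟩ := hu n
        refine ⟨phi Q C v, ?_, ?_⟩
        · obtain ⟨k, f, g, s, hs, rfl⟩ := hv
          rw [phi_sum]
          apply idealGen_sum
          intro j _
          rw [phi_conv, phi_conv]
          obtain ⟨b, hb⟩ := hs j
          obtain a | c := b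
          · have hs' : phi Q C (s j) = Q.cycDer a S := by
              rw [← hb]
              show phi Q C ((Q.dsum C).cycDer (Sum.inl a) _) = _
              rw [cycDer_dsum_inl, phi_inclL]
            rw [hs']
            exact idealGen_triple (Set.mem_range_self a) _ _
          · have hs' : phi Q C (s j) = 0 := by
              rw [← hb]
              show phi Q C ((Q.dsum C).cycDer (Sum.inr c) _) = 0
              rw [cycDer_dsum_inr, phi_inclR_cycDer hT2]
            rw [hs', conv_zero_left, conv_zero_right]
            exact idealGen_zero _
        · intro p hp
          cases p with
          | inl x => exact hagree (Sum.inl x) hp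
          | inr l =>
            rw [phi_inr, phi_inr]
            exact hagree (Sum.inr (mapL Q C l)) (lt_of_eq_of_lt (mapL_length Q C l) hp)
  · refine ⟨fun u i => u (Sum.inl i), fun u v => rfl, fun c u => rfl, fun u v => rfl,
      rfl, fun i => ?_, ?_, fun u => ?_⟩
    · funext j
      change C.idem i (Sum.inl j) = _
      rw [Pi.single_apply]
      simp [idem, Sum.inl.injEq]
    · intro f
      exact ⟨Sum.elim f (fun _ => 0), rfl⟩
    · constructor
      · intro h0
        apply mem_mAdicCl_idealGen
        · intro x
          exact congrFun h0 x
        · intro m _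
          obtain ⟨a, rest, hsplit⟩ := List.exists_cons_of_ne_nil m.2.1
          obtain ⟨t, ht⟩ := (Submodule.mem_span_range_iff_exists_fun ℂ).mp
            (hspan (C.arrowδ a) (arrowδ_support a))
          refine pathδ_mem_of_arrow m (show m.1 = [] ++ a :: rest from hsplit) t
            (fun i => C.cycDer i T) (fun i => ⟨i, rfl⟩) ?_
          rw [← arrowδ_eq_D (C.src a) a]
          exact ht.symm
      · intro hJ
        funext x
        obtain ⟨v, hv, hagree⟩ := hJ 1
        show u (Sum.inl x) = 0
        rw [hagree (Sum.inl x) Nat.zero_lt_one]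
        exact idealGen_inl_eq_zero (cycDer_inl_eq_zero hT2) hv x
end

section
/- Flips of arcs in triangulations of a polygon correspond to diagonal flips: for a convex (n+3)-gon, the exchange graph whose vertices are triangulations (by non-crossing diagonals) and whose edges are flips is connected, i.e., any two triangulations of the polygon are related by a finite sequence of flips. -/
/-- The pair `p = (i, j)` with `i < j` is a side of the convex polygon with vertex set
`Fin m` (vertices labelled clockwise). -/
def IsSide (m : ℕ) (p : Fin m × Fin m) : Prop :=
  p.1 < p.2 ∧ ((p.2 : ℕ) = (p.1 : ℕ) + 1 ∨ ((p.1 : ℕ) = 0 ∧ (p.2 : ℕ) = m - 1))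

/-- The pair `p = (i, j)` with `i < j` is a diagonal of the convex polygon with vertex
set `Fin m`: it joins two non-adjacent vertices. -/
def IsDiag (m : ℕ) (p : Fin m × Fin m) : Prop :=
  p.1 < p.2 ∧ ¬((p.2 : ℕ) = (p.1 : ℕ) + 1 ∨ ((p.1 : ℕ) = 0 ∧ (p.2 : ℕ) = m - 1))

/-- The diagonals of the convex polygon with `m` vertices. -/
abbrev Diag (m : ℕ) := {p : Fin m × Fin m // IsDiag m p}

/-- Two diagonals cross iff their endpoints strictly interleave. -/
def Cross {m : ℕ} (d e : Diag m) : Prop :=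
  (d.1.1 < e.1.1 ∧ e.1.1 < d.1.2 ∧ d.1.2 < e.1.2) ∨
  (e.1.1 < d.1.1 ∧ d.1.1 < e.1.2 ∧ e.1.2 < d.1.2)

/-- A triangulation of the convex polygon with `m = n + 3` vertices: a maximal set of
pairwise non-crossing diagonals (equivalently, exactly `m - 3` pairwise non-crossing
diagonals). -/
def IsTriangulation {m : ℕ} (T : Finset (Diag m)) : Prop :=
  (∀ d ∈ T, ∀ e ∈ T, ¬Cross d e) ∧ T.card + 3 = m

/-- The flip relation: `T'` is obtained from the triangulation `T` by removing one
diagonal and replacing it by a (necessarily unique) other diagonal. -/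
def FlipRel {m : ℕ} (T T' : Finset (Diag m)) : Prop :=
  IsTriangulation T ∧ IsTriangulation T' ∧
  ∃ d d' : Diag m, d ∈ T ∧ d' ∉ T ∧ T' = insert d' (T.erase d)

open Finset


lemma cross_iff {m : ℕ} (d e : Diag m) :
    Cross d e ↔ (((d.1.1:ℕ) < (e.1.1:ℕ) ∧ (e.1.1:ℕ) < (d.1.2:ℕ) ∧ (d.1.2:ℕ) < (e.1.2:ℕ)) ∨
      ((e.1.1:ℕ) < (d.1.1:ℕ) ∧ (d.1.1:ℕ) < (e.1.2:ℕ) ∧ (e.1.2:ℕ) < (d.1.2:ℕ))) := by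
  unfold Cross
  simp only [Fin.lt_def]

lemma cross_symm {m : ℕ} {d e : Diag m} (h : Cross d e) : Cross e d :=
  (cross_iff e d).mpr (Or.symm ((cross_iff d e).mp h))

lemma diag_facts {m : ℕ} (d : Diag m) :
    (d.1.1:ℕ) + 2 ≤ (d.1.2:ℕ) ∧ (d.1.2:ℕ) < m ∧ ¬((d.1.1:ℕ) = 0 ∧ (d.1.2:ℕ) = m - 1) := by
  obtain ⟨h1, h2⟩ := d.2
  rw [Fin.lt_def] at h1
  exact ⟨by omega, d.1.2.isLt, fun hh => h2 (Or.inr hh)⟩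

def fN (v z : ℕ) : ℕ := if z < v then z else z - 1

lemma fN_lt_rev {v a b : ℕ} (h : fN v a < fN v b) : a < b := by
  simp only [fN] at h; split_ifs at h <;> omega

lemma fN_inj {v a b : ℕ} (ha : a ≠ v) (hb : b ≠ v) (h : fN v a = fN v b) : a = b := by
  simp only [fN] at h; split_ifs at h <;> omega

lemma noncross_card : ∀ (m : ℕ) (U : Finset (Diag m)),
    (∀ d ∈ U, ∀ e ∈ U, ¬Cross d e) → U.card ≤ m - 3 := by
  intro m
  induction m using Nat.strong_induction_on with
  | _ m IH =>
  intro U hU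
  rcases U.eq_empty_or_nonempty with rfl | hne
  · simp
  obtain ⟨d, hdU, hmin⟩ := U.exists_min_image (fun e => (e.1.2:ℕ) - (e.1.1:ℕ)) hne
  obtain ⟨hd2, hd3, hd4⟩ := diag_facts d
  have hm4 : 4 ≤ m := by omega
  by_cases hm5 : 5 ≤ m
  · have hfree : ∀ e ∈ U, ¬(((d.1.1:ℕ) < (e.1.1:ℕ)) ∧ (e.1.1:ℕ) < (d.1.2:ℕ)) ∧
        ¬(((d.1.1:ℕ) < (e.1.2:ℕ)) ∧ (e.1.2:ℕ) < (d.1.2:ℕ)) := by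
      intro e he
      have hnc := hU d hdU e he
      rw [cross_iff] at hnc
      have hm := hmin e he
      obtain ⟨he2, he3, he4⟩ := diag_facts e
      constructor <;> omega
    set x := (d.1.1:ℕ) with hx
    set y := (d.1.2:ℕ) with hy
    set v := x + 1 with hv
    have hEx : ∀ e ∈ U.erase d, ∃ g : Diag (m-1),
        (g.1.1:ℕ) = fN v (e.1.1:ℕ) ∧ (g.1.2:ℕ) = fN v (e.1.2:ℕ) := by
      intro e he
      have heU := mem_of_mem_erase he
      have hed : e ≠ d := ne_of_mem_erase he
      obtain ⟨hf1, hf2⟩ := hfree e heU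
      obtain ⟨he2, he3, he4⟩ := diag_facts e
      have hne2 : ¬((e.1.1:ℕ) = x ∧ (e.1.2:ℕ) = x + 2) := by
        rintro ⟨h1, h2⟩
        rcases Nat.lt_or_ge (x+2) y with hc | hc
        · exact hf2 ⟨by omega, by omega⟩
        · exact hed (Subtype.ext (Prod.ext (Fin.ext (by omega)) (Fin.ext (by omega))))
      refine ⟨⟨(⟨fN v (e.1.1:ℕ), ?_⟩, ⟨fN v (e.1.2:ℕ), ?_⟩), ?_, ?_⟩, rfl, rfl⟩
      · simp only [fN]; split_ifs <;> omega
      · simp only [fN]; split_ifs <;> omega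
      · rw [Fin.lt_def]; simp only [fN]; split_ifs <;> omega
      · show ¬(fN v (e.1.2:ℕ) = fN v (e.1.1:ℕ) + 1 ∨ (fN v (e.1.1:ℕ) = 0 ∧ fN v (e.1.2:ℕ) = (m-1) - 1))
        simp only [fN]; split_ifs <;> omega
    classical
    have hWv : ∀ e ∈ U.erase d, (e.1.1:ℕ) ≠ v ∧ (e.1.2:ℕ) ≠ v := by
      intro e he
      obtain ⟨hf1, hf2⟩ := hfree e (mem_of_mem_erase he)
      constructor <;> omega
    set V := (U.erase d).attach.image (fun e => (hEx e.1 e.2).choose) with hV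
    have hinj : V.card = (U.erase d).card := by
      rw [hV, Finset.card_image_of_injOn, Finset.card_attach]
      intro e _ e' _ hee
      dsimp only at hee
      obtain ⟨h1, h2⟩ := (hEx e.1 e.2).choose_spec
      obtain ⟨h1', h2'⟩ := (hEx e'.1 e'.2).choose_spec
      rw [hee] at h1 h2
      obtain ⟨k1, k2⟩ := hWv e.1 e.2
      obtain ⟨k1', k2'⟩ := hWv e'.1 e'.2
      have q1 : (e.1.1.1:ℕ) = (e'.1.1.1:ℕ) := fN_inj k1 k1' (by omega)
      have q2 : (e.1.1.2:ℕ) = (e'.1.1.2:ℕ) := fN_inj k2 k2' (by omega)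
      exact Subtype.ext (Subtype.ext (Prod.ext (Fin.ext q1) (Fin.ext q2)))
    have hVnc : ∀ g ∈ V, ∀ g' ∈ V, ¬Cross g g' := by
      intro g hg g' hg' hc
      rw [hV, mem_image] at hg hg'
      obtain ⟨e, _, rfl⟩ := hg
      obtain ⟨e', _, rfl⟩ := hg'
      obtain ⟨h1, h2⟩ := (hEx e.1 e.2).choose_spec
      obtain ⟨h1', h2'⟩ := (hEx e'.1 e'.2).choose_spec
      rw [cross_iff, h1, h2, h1', h2'] at hc
      refine hU e.1 (mem_of_mem_erase e.2) e'.1 (mem_of_mem_erase e'.2) ?_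
      rw [cross_iff]
      rcases hc with ⟨a1,a2,a3⟩|⟨a1,a2,a3⟩
      · exact Or.inl ⟨fN_lt_rev a1, fN_lt_rev a2, fN_lt_rev a3⟩
      · exact Or.inr ⟨fN_lt_rev a1, fN_lt_rev a2, fN_lt_rev a3⟩
    have hIH := IH (m-1) (by omega) V hVnc
    have hUe : U.card = (U.erase d).card + 1 := by
      rw [Finset.card_erase_of_mem hdU]
      have : 1 ≤ U.card := Finset.card_pos.mpr hne
      omega
    omega
  · -- m = 4
    have hm : m = 4 := by omega
    subst hm
    have henum : ∀ e : Diag 4, ((e.1.1:ℕ) = 0 ∧ (e.1.2:ℕ) = 2) ∨ ((e.1.1:ℕ) = 1 ∧ (e.1.2:ℕ) = 3) := by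
      intro e
      obtain ⟨a, b, c⟩ := diag_facts e
      omega
    refine le_trans (Finset.card_le_one.mpr ?_) (by norm_num)
    intro a ha b hb
    by_contra hab
    rcases henum a with ⟨s1,s2⟩|⟨s1,s2⟩ <;> rcases henum b with ⟨t1,t2⟩|⟨t1,t2⟩
    · exact hab (Subtype.ext (Prod.ext (Fin.ext (by omega)) (Fin.ext (by omega))))
    · exact hU a ha b hb ((cross_iff a b).mpr (by omega))
    · exact hU a ha b hb ((cross_iff a b).mpr (by omega))
    · exact hab (Subtype.ext (Prod.ext (Fin.ext (by omega)) (Fin.ext (by omega))))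

noncomputable def deg0 {m : ℕ} (T : Finset (Diag m)) : ℕ :=
  (T.filter fun d => (d.1.1:ℕ) = 0).card

lemma flip_step {m : ℕ} (T : Finset (Diag m)) (hT : IsTriangulation T)
    (hlt : deg0 T < m - 3) :
    ∃ T', FlipRel T T' ∧ deg0 T' = deg0 T + 1 := by
  classical
  obtain ⟨hnc, hcard⟩ := hT
  have hm : 4 ≤ m := by omega
  set S : Finset ℕ := insert 1 (insert (m-1)
    ((T.filter fun d => (d.1.1:ℕ) = 0).image fun d => (d.1.2:ℕ))) with hS
  have memS : ∀ s, s ∈ S ↔ s = 1 ∨ s = m - 1 ∨ ∃ d ∈ T, (d.1.1:ℕ) = 0 ∧ (d.1.2:ℕ) = s := by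
    intro s
    simp only [hS, mem_insert, mem_image, mem_filter]
    tauto
  have hScard : S.card < m - 1 := by
    have h1 : S.card ≤ (insert (m-1) ((T.filter fun d => (d.1.1:ℕ) = 0).image fun d => (d.1.2:ℕ))).card + 1 :=
      card_insert_le _ _
    have h2 : (insert (m-1) ((T.filter fun d => (d.1.1:ℕ) = 0).image fun d => (d.1.2:ℕ))).card ≤
        ((T.filter fun d => (d.1.1:ℕ) = 0).image fun d => (d.1.2:ℕ)).card + 1 := card_insert_le _ _
    have h3 : ((T.filter fun d => (d.1.1:ℕ) = 0).image fun d => (d.1.2:ℕ)).card ≤ deg0 T :=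
      card_image_le
    omega
  have hSsub : S ⊆ Finset.Icc 1 (m-1) := by
    intro s hs
    rw [memS] at hs
    rw [Finset.mem_Icc]
    rcases hs with rfl | rfl | ⟨d, _, h0, h2⟩
    · omega
    · omega
    · obtain ⟨a, b, c⟩ := diag_facts d; omega
  obtain ⟨c, hcI, hcS⟩ : ∃ c ∈ Finset.Icc 1 (m-1), c ∉ S := by
    by_contra h
    push_neg at h
    have := Finset.card_le_card h
    rw [Nat.card_Icc] at this
    omega
  rw [Finset.mem_Icc] at hcI
  have hc1 : c ≠ 1 := fun h => hcS ((memS c).mpr (Or.inl h))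
  have hcm : c ≠ m - 1 := fun h => hcS ((memS c).mpr (Or.inr (Or.inl h)))
  set SL := S.filter (· < c) with hSL
  set SR := S.filter (c < ·) with hSR
  have hSLne : SL.Nonempty := ⟨1, mem_filter.mpr ⟨(memS 1).mpr (Or.inl rfl), by omega⟩⟩
  have hSRne : SR.Nonempty := ⟨m-1, mem_filter.mpr ⟨(memS (m-1)).mpr (Or.inr (Or.inl rfl)), by omega⟩⟩
  set a := SL.max' hSLne with ha
  set b := SR.min' hSRne with hb
  have haS : a ∈ S := (mem_filter.mp (SL.max'_mem hSLne)).1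
  have hac : a < c := (mem_filter.mp (SL.max'_mem hSLne)).2
  have hbS : b ∈ S := (mem_filter.mp (SR.min'_mem hSRne)).1
  have hcb : c < b := (mem_filter.mp (SR.min'_mem hSRne)).2
  have hgap : ∀ s ∈ S, ¬(a < s ∧ s < b) := by
    rintro s hs ⟨h1, h2⟩
    rcases lt_trichotomy s c with h | rfl | h
    · have : s ≤ a := SL.le_max' s (mem_filter.mpr ⟨hs, h⟩)
      omega
    · exact hcS hs
    · have : b ≤ s := SR.min'_le s (mem_filter.mpr ⟨hs, h⟩)
      omega
  have ha1 : 1 ≤ a := (Finset.mem_Icc.mp (hSsub haS)).1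
  have hbm : b ≤ m - 1 := (Finset.mem_Icc.mp (hSsub hbS)).2
  have hdiagS : ∀ s ∈ S, s ≠ 1 → s ≠ m-1 → ∃ d ∈ T, (d.1.1:ℕ) = 0 ∧ (d.1.2:ℕ) = s := by
    intro s hs h1 h2
    rcases (memS s).mp hs with h | h | h
    · exact absurd h h1
    · exact absurd h h2
    · exact h
  set g : Diag m := ⟨(⟨a, by omega⟩, ⟨b, by omega⟩),
    Fin.mk_lt_mk.mpr (by omega),
    (by show ¬(b = a + 1 ∨ (a = 0 ∧ b = m - 1)); omega)⟩ with hg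
  have hg1 : (g.1.1:ℕ) = a := rfl
  have hg2 : (g.1.2:ℕ) = b := rfl
  have hgndiag : ∀ e ∈ T, ¬Cross g e := by
    intro e he hce
    rw [cross_iff, hg1, hg2] at hce
    obtain ⟨he2, he3, he4⟩ := diag_facts e
    rcases hce with ⟨h1, h2, h3⟩ | ⟨h1, h2, h3⟩
    · obtain ⟨db, hdb, hb0, hbb⟩ := hdiagS b hbS (by omega) (by omega)
      exact hnc db hdb e he ((cross_iff _ _).mpr (Or.inl (by omega)))
    · rcases Nat.eq_zero_or_pos (e.1.1:ℕ) with h0 | h0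
      · have : (e.1.2:ℕ) ∈ S := (memS _).mpr (Or.inr (Or.inr ⟨e, he, h0, rfl⟩))
        exact hgap _ this ⟨h2, h3⟩
      · obtain ⟨da, hda, ha0, haa⟩ := hdiagS a haS (by omega) (by omega)
        exact hnc da hda e he ((cross_iff _ _).mpr (Or.inl (by omega)))
  have hgT : g ∈ T := by
    by_contra hgT
    have hU2 : ∀ p ∈ insert g T, ∀ q ∈ insert g T, ¬Cross p q := by
      intro p hp q hq
      rcases mem_insert.mp hp with rfl | hp' <;> rcases mem_insert.mp hq with rfl | hq'
      · rw [cross_iff, hg1, hg2]; omega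
      · exact hgndiag q hq'
      · exact fun hc => hgndiag p hp' (cross_symm hc)
      · exact hnc p hp' q hq'
    have := noncross_card m (insert g T) hU2
    rw [card_insert_of_notMem hgT] at this
    omega
  set Y : Finset ℕ := insert (a+1)
    ((T.filter fun e => (e.1.1:ℕ) = a ∧ (e.1.2:ℕ) < b).image fun e => (e.1.2:ℕ)) with hY
  have hYne : Y.Nonempty := ⟨a+1, mem_insert_self _ _⟩
  set cc := Y.max' hYne with hcc
  have hccY : cc ∈ Y := Y.max'_mem hYne
  have hcc1 : a + 1 ≤ cc := Y.le_max' _ (mem_insert_self _ _)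
  have hccb : cc < b := by
    rcases mem_insert.mp hccY with h | h
    · omega
    · rw [mem_image] at h
      obtain ⟨e, he, hee⟩ := h
      rw [mem_filter] at he
      omega
  set d' : Diag m := ⟨(⟨0, by omega⟩, ⟨cc, by omega⟩),
    Fin.mk_lt_mk.mpr (by omega),
    (by show ¬(cc = 0 + 1 ∨ ((0:ℕ) = 0 ∧ cc = m - 1)); omega)⟩ with hd'
  have hd'1 : (d'.1.1:ℕ) = 0 := rfl
  have hd'2 : (d'.1.2:ℕ) = cc := rfl
  have hd'T : d' ∉ T := by
    intro h
    have : cc ∈ S := (memS cc).mpr (Or.inr (Or.inr ⟨d', h, rfl, rfl⟩))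
    exact hgap cc this ⟨by omega, hccb⟩
  have hkey : ∀ e ∈ T, e ≠ g → ¬Cross d' e := by
    intro e he heg hc
    rw [cross_iff, hd'1, hd'2] at hc
    obtain ⟨he2, he3, he4⟩ := diag_facts e
    have hx0 : 0 < (e.1.1:ℕ) := by omega
    have hx1 : (e.1.1:ℕ) < cc := by omega
    have hx2 : cc < (e.1.2:ℕ) := by omega
    have hstep1 : a ≤ (e.1.1:ℕ) := by
      by_contra h
      push_neg at h
      obtain ⟨da, hda, ha0, haa⟩ := hdiagS a haS (by omega) (by omega)
      exact hnc da hda e he ((cross_iff _ _).mpr (Or.inl (by omega)))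
    have hstep2 : (e.1.2:ℕ) ≤ b := by
      by_contra h
      push_neg at h
      rcases Nat.lt_or_ge a (e.1.1:ℕ) with h' | h'
      · exact hnc g hgT e he ((cross_iff _ _).mpr (Or.inl (by rw [hg1, hg2]; omega)))
      · obtain ⟨db, hdb, hb0, hbb⟩ := hdiagS b hbS (by omega) (by omega)
        exact hnc db hdb e he ((cross_iff _ _).mpr (Or.inl (by omega)))
    rcases Nat.eq_or_lt_of_le hstep1 with h' | h'
    · rcases Nat.eq_or_lt_of_le hstep2 with h'' | h''
      · exact heg (Subtype.ext (Prod.ext (Fin.ext (by omega)) (Fin.ext (by omega))))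
      · have hmem : (e.1.2:ℕ) ∈ Y := by
          rw [hY, mem_insert]
          right
          rw [mem_image]
          exact ⟨e, mem_filter.mpr ⟨he, h'.symm, h''⟩, rfl⟩
        have := Y.le_max' _ hmem
        omega
    · rcases mem_insert.mp hccY with h'' | h''
      · omega
      · rw [mem_image] at h''
        obtain ⟨ec, hec, hec2⟩ := h''
        rw [mem_filter] at hec
        obtain ⟨hecT, hecA, hecB⟩ := hec
        exact hnc ec hecT e he ((cross_iff _ _).mpr (Or.inl (by omega)))
  have hd'e : d' ∉ T.erase g := fun h => hd'T (mem_of_mem_erase h)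
  refine ⟨insert d' (T.erase g), ⟨⟨hnc, hcard⟩, ⟨?_, ?_⟩, g, d', hgT, hd'T, rfl⟩, ?_⟩
  · intro p hp q hq
    rcases mem_insert.mp hp with rfl | hp' <;> rcases mem_insert.mp hq with rfl | hq'
    · rw [cross_iff, hd'1, hd'2]; omega
    · exact hkey q (mem_of_mem_erase hq') (ne_of_mem_erase hq')
    · exact fun hc => hkey p (mem_of_mem_erase hp') (ne_of_mem_erase hp') (cross_symm hc)
    · exact hnc p (mem_of_mem_erase hp') q (mem_of_mem_erase hq')
  · rw [card_insert_of_notMem hd'e, card_erase_of_mem hgT]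
    omega
  · unfold deg0
    rw [filter_insert, if_pos hd'1, Finset.filter_erase,
      Finset.erase_eq_of_notMem (by
        intro h
        rw [mem_filter, hg1] at h
        omega),
      card_insert_of_notMem (by
        intro h
        exact hd'T (mem_of_mem_filter _ h))]

instance instDecIsDiag (m : ℕ) : DecidablePred (IsDiag m) := fun p =>
  inferInstanceAs (Decidable (p.1 < p.2 ∧ ¬((p.2 : ℕ) = (p.1 : ℕ) + 1 ∨ ((p.1 : ℕ) = 0 ∧ (p.2 : ℕ) = m - 1))))

lemma fliprel_symm {m : ℕ} : Symmetric (@FlipRel m) := by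
  rintro T T' ⟨h1, h2, d, d', hd, hd', rfl⟩
  have hdd' : d ≠ d' := fun h => hd' (h ▸ hd)
  have hd'e : d' ∉ T.erase d := fun h => hd' (mem_of_mem_erase h)
  refine ⟨h2, h1, d', d, mem_insert_self _ _, ?_, ?_⟩
  · rw [mem_insert]
    rintro (h | h)
    · exact hdd' h
    · exact (notMem_erase d T) h
  · rw [Finset.erase_insert hd'e, Finset.insert_erase hd]

/-- Connectivity of the exchange graph of triangulations of a convex polygon under
flips: any two triangulations of the convex `(n+3)`-gon are related by a finite
sequence of flips. -/
theorem stmt18 (m : ℕ) (hm : 3 ≤ m) (T T' : Finset (Diag m))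
    (hT : IsTriangulation T) (hT' : IsTriangulation T') :
    Relation.ReflTransGen FlipRel T T' := by
  classical
  set Fan : Finset (Diag m) := Finset.univ.filter (fun d => (d.1.1:ℕ) = 0) with hFan
  have hFanNC : ∀ d ∈ Fan, ∀ e ∈ Fan, ¬Cross d e := by
    intro d hd e he hc
    rw [hFan, mem_filter] at hd he
    rw [cross_iff] at hc
    omega
  have hFanCard : Fan.card ≤ m - 3 := noncross_card m Fan hFanNC
  have eqFan : ∀ U : Finset (Diag m), IsTriangulation U → deg0 U = m - 3 → U = Fan := by
    intro U hU hdeg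
    have hfil : U.filter (fun d => (d.1.1:ℕ) = 0) = U := by
      apply eq_of_subset_of_card_le (filter_subset _ _)
      have := hU.2
      unfold deg0 at hdeg
      omega
    have hsub : U ⊆ Fan := by
      intro d hd
      rw [hFan, mem_filter]
      refine ⟨mem_univ _, ?_⟩
      rw [← hfil] at hd
      exact (mem_filter.mp hd).2
    apply eq_of_subset_of_card_le hsub
    have := hU.2
    omega
  have reach : ∀ k (U : Finset (Diag m)), IsTriangulation U → m - 3 - deg0 U ≤ k →
      Relation.ReflTransGen FlipRel U Fan := by
    intro k
    induction k with
    | zero =>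
      intro U hU hk
      have hle : deg0 U ≤ U.card := card_filter_le _ _
      have := hU.2
      rw [eqFan U hU (by omega)]
    | succ k ih =>
      intro U hU hk
      by_cases hd : deg0 U = m - 3
      · rw [eqFan U hU hd]
      · have hle : deg0 U ≤ U.card := card_filter_le _ _
        have := hU.2
        have hlt : deg0 U < m - 3 := by omega
        obtain ⟨T2, hF, hdeg⟩ := flip_step U hU hlt
        exact Relation.ReflTransGen.head hF (ih T2 hF.2.1 (by omega))
  exact (reach _ T hT le_rfl).trans (haveI : Std.Symm (@FlipRel m) := ⟨fun _ _ h => fliprel_symm h⟩; Relation.ReflTransGen.symmetric.symm _ _ (reach _ T' hT' le_rfl))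
end
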